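/- For the problem (P^P_K) defined by: inf t over (y,z,t,w) ∈ ℝ^m × K × ℝ₊ × ℝ₊ with b^⊤y + t − w = 0, ⟨e,z⟩ + w = 1, −A*y − z + te = 0: the optimal value is zero if and only if (P) (inf ⟨c,x⟩ s.t. Ax=b, x ∈ K) is not strongly feasible. Moreover, if (y*,z*,t*,w*) is an optimal solution with t* = 0, then (y*, z*) is either an improving ray of (D) (i.e., −A*y* ∈ K and b^⊤y* > 0) or a reducing direction for (P) (i.e., −A*y* ∈ K \ {0} and b^⊤y* = 0). -/

import Mathlib

open scoped RealInnerProductSpace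

private lemma aux_delta {E : Type*} [NormedAddCommGroup E] [InnerProductSpace ℝ E]
    {K : Set E}
    (hKselfdual : {s : E | ∀ z ∈ K, 0 ≤ ⟪s, z⟫} = K)
    {x : E} (hx : x ∈ interior K) :
    ∃ δ > 0, ∀ z ∈ K, δ * ‖z‖ ≤ ⟪x, z⟫ := by
  obtain ⟨r, hr, hball⟩ := Metric.mem_nhds_iff.mp (mem_interior_iff_mem_nhds.mp hx)
  refine ⟨r / 2, by positivity, fun z hz => ?_⟩
  rcases eq_or_ne z 0 with rfl | hz0
  · simp
  · have hnz : (0:ℝ) < ‖z‖ := norm_pos_iff.mpr hz0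
    have hp : x - ((r / 2) / ‖z‖) • z ∈ K := by
      apply hball
      rw [Metric.mem_ball, dist_eq_norm]
      have : x - (r / 2 / ‖z‖) • z - x = -((r / 2 / ‖z‖) • z) := by abel
      rw [this, norm_neg, norm_smul, Real.norm_eq_abs,
        abs_of_nonneg (by positivity : (0:ℝ) ≤ r / 2 / ‖z‖)]
      rw [div_mul_cancel₀ _ hnz.ne']
      linarith
    rw [← hKselfdual] at hp
    have h0 := hp z hz
    rw [inner_sub_left, real_inner_smul_left, real_inner_self_eq_norm_sq] at h0
    have : r / 2 / ‖z‖ * ‖z‖ ^ 2 = r / 2 * ‖z‖ := by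
      field_simp
    nlinarith

private lemma aux_smul_interior {E : Type*} [NormedAddCommGroup E] [InnerProductSpace ℝ E]
    {K : Set E} (hKcone : ∀ z ∈ K, ∀ t : ℝ, 0 ≤ t → t • z ∈ K)
    {x : E} (hx : x ∈ interior K) {t : ℝ} (ht : 0 < t) : t • x ∈ interior K := by
  obtain ⟨r, hr, hball⟩ := Metric.mem_nhds_iff.mp (mem_interior_iff_mem_nhds.mp hx)
  apply mem_interior.mpr
  refine ⟨Metric.ball (t • x) (t * r), fun u hu => ?_, Metric.isOpen_ball,
    Metric.mem_ball_self (by positivity)⟩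
  have hmem : t⁻¹ • u ∈ Metric.ball x r := by
    rw [Metric.mem_ball, dist_eq_norm] at hu ⊢
    have heq : t⁻¹ • u - x = t⁻¹ • (u - t • x) := by
      rw [smul_sub, smul_smul, inv_mul_cancel₀ ht.ne', one_smul]
    rw [heq, norm_smul, Real.norm_eq_abs, abs_of_pos (by positivity)]
    calc t⁻¹ * ‖u - t • x‖ < t⁻¹ * (t * r) := by
          apply mul_lt_mul_of_pos_left hu (by positivity)
      _ = r := by field_simp
  have := hKcone _ (hball hmem) t ht.le
  rwa [smul_inv_smul₀ ht.ne' u] at this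

private lemma aux_sep {E : Type*} [NormedAddCommGroup E] [InnerProductSpace ℝ E]
    [FiniteDimensional ℝ E] {m : ℕ}
    (A : E →ₗ[ℝ] EuclideanSpace ℝ (Fin m)) {U : Set E} (hUo : IsOpen U) (hUc : Convex ℝ U)
    {b : EuclideanSpace ℝ (Fin m)} (hb : ¬ ∃ x ∈ U, A x = b) :
    ∃ y : EuclideanSpace ℝ (Fin m), ∀ x ∈ U, ⟪y, A x⟫ < ⟪y, b⟫ := by
  set R := LinearMap.range A with hR
  by_cases hbR : b ∈ R
  · -- b in range: separate inside R using openness of the image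
    let A' : E →ₗ[ℝ] R := A.rangeRestrict
    have hopen : IsOpenMap A' := by
      have h := ContinuousLinearMap.isOpenMap (LinearMap.toContinuousLinearMap A')
        A.surjective_rangeRestrict
      simpa using h
    have hs'o : IsOpen (A' '' U) := hopen U hUo
    have hs'c : Convex ℝ (A' '' U) := hUc.linear_image A'
    have hbmem : (⟨b, hbR⟩ : R) ∉ A' '' U := by
      rintro ⟨x, hx, hAx⟩
      exact hb ⟨x, hx, congrArg Subtype.val hAx⟩
    obtain ⟨f, hf⟩ := geometric_hahn_banach_open_point hs'c hs'o hbmem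
    set y₀ := (InnerProductSpace.toDual ℝ R).symm f with hy₀
    refine ⟨(y₀ : EuclideanSpace ℝ (Fin m)), fun x hx => ?_⟩
    have h1 : ⟪(y₀ : EuclideanSpace ℝ (Fin m)), A x⟫ = f (A' x) := by
      rw [← InnerProductSpace.toDual_symm_apply (𝕜 := ℝ) (E := R) (y := f) (x := A' x)]
      rw [Submodule.coe_inner]
      rfl
    have h2 : ⟪(y₀ : EuclideanSpace ℝ (Fin m)), b⟫ = f ⟨b, hbR⟩ := by
      rw [← InnerProductSpace.toDual_symm_apply (𝕜 := ℝ) (E := R) (y := f) (x := ⟨b, hbR⟩)]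
      rw [Submodule.coe_inner]
    rw [h1, h2]
    exact hf _ ⟨x, hx, rfl⟩
  · -- b not in range: use orthogonal complement direction
    set y := b - (Submodule.orthogonalProjectionOnto R b : EuclideanSpace ℝ (Fin m)) with hy
    have hy0 : ∀ w ∈ R, ⟪y, w⟫ = 0 := fun w hw => Submodule.starProjection_inner_eq_zero b w hw
    have hyne : y ≠ 0 := by
      intro h
      apply hbR
      rw [sub_eq_zero] at h
      rw [h]
      exact Submodule.coe_mem _
    refine ⟨y, fun x hx => ?_⟩
    have h1 : ⟪y, A x⟫ = 0 := hy0 _ (LinearMap.mem_range_self A x)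
    have h2 : ⟪y, b⟫ = ‖y‖ ^ 2 := by
      have : b = y + (Submodule.orthogonalProjectionOnto R b : EuclideanSpace ℝ (Fin m)) := by
        rw [hy]; abel
      rw [this, inner_add_right, real_inner_self_eq_norm_sq,
        hy0 _ (Submodule.coe_mem _), add_zero]
    rw [h1, h2]
    exact pow_pos (norm_pos_iff.mpr hyne) 2


/-- For the auxiliary problem `(P^P_K)`: `inf t` over
`(y,z,t,w) ∈ ℝ^m × K × ℝ₊ × ℝ₊` with `b^⊤y + t − w = 0`, `⟨e,z⟩ + w = 1`,
`−A*y − z + te = 0`: the optimal value is zero iff (P) is not strongly feasible; and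
every feasible solution with `t = 0` yields `(y,z)` which is either an improving ray of
(D) (`−A*y ∈ K`, `b^⊤y > 0`) or a reducing direction for (P) (`−A*y ∈ K \ {0}`,
`b^⊤y = 0`). -/
theorem stmt15 {E : Type*} [NormedAddCommGroup E] [InnerProductSpace ℝ E]
    [FiniteDimensional ℝ E] {m : ℕ} (K : Set E) (e : E)
    (hKclosed : IsClosed K) (hKconv : Convex ℝ K)
    (hKcone : ∀ z ∈ K, ∀ t : ℝ, 0 ≤ t → t • z ∈ K)
    (hKselfdual : {s : E | ∀ z ∈ K, 0 ≤ ⟪s, z⟫} = K)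
    (he : e ∈ interior K)
    (A : E →ₗ[ℝ] EuclideanSpace ℝ (Fin m)) (b : EuclideanSpace ℝ (Fin m)) :
    (sInf {v : EReal | ∃ (y : EuclideanSpace ℝ (Fin m)) (z : E) (t w : ℝ),
        z ∈ K ∧ 0 ≤ t ∧ 0 ≤ w ∧ ⟪b, y⟫ + t - w = 0 ∧ ⟪e, z⟫ + w = 1 ∧
        -((LinearMap.adjoint A) y) - z + t • e = 0 ∧ v = (t : EReal)} = (0 : EReal) ↔
      ¬(∃ x ∈ interior K, A x = b)) ∧
    (∀ (y : EuclideanSpace ℝ (Fin m)) (z : E) (w : ℝ),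
      z ∈ K → 0 ≤ w → ⟪b, y⟫ + 0 - w = 0 → ⟪e, z⟫ + w = 1 →
      -((LinearMap.adjoint A) y) - z + (0 : ℝ) • e = 0 →
      (-((LinearMap.adjoint A) y) ∈ K ∧ 0 < ⟪b, y⟫) ∨
      (-((LinearMap.adjoint A) y) ∈ K ∧ -((LinearMap.adjoint A) y) ≠ 0 ∧ ⟪b, y⟫ = 0)) := by
  have heK : e ∈ K := interior_subset he
  constructor
  · constructor
    · -- sInf = 0 → not strongly feasible
      intro hinf hsf
      obtain ⟨x, hxint, hAx⟩ := hsf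
      obtain ⟨δ, hδ, hδle⟩ := aux_delta hKselfdual hxint
      have hxe : 0 ≤ ⟪x, e⟫ :=
        le_trans (by positivity) (hδle e heK)
      set c1 : ℝ := 1 + ⟪x, e⟫ with hc1
      have hc1pos : 0 < c1 := by rw [hc1]; linarith
      set tmin : ℝ := δ / (c1 * (‖e‖ + δ)) with htmin
      have htminpos : 0 < tmin := by
        apply div_pos hδ
        apply mul_pos hc1pos
        have := norm_nonneg e
        linarith
      have hlow : ∀ v ∈ {v : EReal | ∃ (y : EuclideanSpace ℝ (Fin m)) (z : E) (t w : ℝ),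
          z ∈ K ∧ 0 ≤ t ∧ 0 ≤ w ∧ ⟪b, y⟫ + t - w = 0 ∧ ⟪e, z⟫ + w = 1 ∧
          -((LinearMap.adjoint A) y) - z + t • e = 0 ∧ v = (t : EReal)},
          ((tmin : ℝ) : EReal) ≤ v := by
        rintro v ⟨y, z, t, w, hzK, ht, hw, h1, h2, h3, rfl⟩
        have hz : z = t • e - (LinearMap.adjoint A) y := by
          rw [← sub_eq_zero]
          have hre : z - (t • e - (LinearMap.adjoint A) y)
              = -(-((LinearMap.adjoint A) y) - z + t • e) := by abel
          rw [hre, h3, neg_zero]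
        have hadj : ⟪x, (LinearMap.adjoint A) y⟫ = ⟪b, y⟫ := by
          rw [real_inner_comm, LinearMap.adjoint_inner_left, hAx, real_inner_comm]
        have hxz : ⟪x, z⟫ = t * c1 - w := by
          rw [hz, inner_sub_right, real_inner_smul_right, hadj, hc1]
          have : ⟪b, y⟫ = w - t := by linarith
          rw [this]; ring
        have h0xz : 0 ≤ ⟪x, z⟫ := le_trans (by positivity) (hδle z hzK)
        have hnz : δ * ‖z‖ ≤ t * c1 := by
          have := hδle z hzK
          linarith [hxz, hw]
        have hez : ⟪e, z⟫ ≤ ‖e‖ * ‖z‖ := real_inner_le_norm e z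
        have hw' : w ≤ t * c1 := by linarith
        have f1 : δ * ⟪e, z⟫ ≤ δ * (‖e‖ * ‖z‖) := mul_le_mul_of_nonneg_left hez hδ.le
        have f2 : δ * (‖e‖ * ‖z‖) ≤ ‖e‖ * (t * c1) := by
          calc δ * (‖e‖ * ‖z‖) = ‖e‖ * (δ * ‖z‖) := by ring
            _ ≤ ‖e‖ * (t * c1) := mul_le_mul_of_nonneg_left hnz (norm_nonneg e)
        have f3 : δ * w ≤ δ * (t * c1) := mul_le_mul_of_nonneg_left hw' hδ.le
        have hsum : δ * ⟪e, z⟫ + δ * w = δ := by rw [← mul_add, h2, mul_one]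
        have key : δ ≤ ‖e‖ * (t * c1) + δ * (t * c1) := by linarith
        have htfin : tmin ≤ t := by
          rw [htmin, div_le_iff₀ (by positivity)]
          calc δ ≤ ‖e‖ * (t * c1) + δ * (t * c1) := key
            _ = t * (c1 * (‖e‖ + δ)) := by ring
        exact_mod_cast htfin
      have hge : ((tmin : ℝ) : EReal) ≤ (0 : EReal) := by
        rw [← hinf]
        exact le_sInf hlow
      have : tmin ≤ (0:ℝ) := by exact_mod_cast hge
      linarith
    · -- not strongly feasible → sInf = 0
      intro hns
      obtain ⟨y, hy⟩ := aux_sep A isOpen_interior hKconv.interior hns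
      have hqin : ∀ v : E, ⟪(LinearMap.adjoint A) y, v⟫ = ⟪y, A v⟫ := fun v =>
        LinearMap.adjoint_inner_left A v y
      set q : E := (LinearMap.adjoint A) y with hq
      -- ⟪q, x⟫ ≤ 0 on the interior of K
      have hint : ∀ x ∈ interior K, ⟪q, x⟫ ≤ 0 := by
        intro x hx
        by_contra hpos
        push_neg at hpos
        set l : ℝ := (|⟪y, b⟫| + 1) / ⟪q, x⟫ with hl
        have hlpos : 0 < l := div_pos (by positivity) hpos
        have h := hy (l • x) (aux_smul_interior hKcone hx hlpos)
        rw [map_smul, real_inner_smul_right, ← hqin] at h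
        have hlc : l * ⟪q, x⟫ = |⟪y, b⟫| + 1 := div_mul_cancel₀ _ hpos.ne'
        rw [hlc] at h
        have := le_abs_self ⟪y, b⟫
        linarith
      -- extend to all of K
      have hK0 : ∀ z ∈ K, ⟪q, z⟫ ≤ 0 := by
        intro z hz
        by_contra hpos
        push_neg at hpos
        set c : ℝ := ⟪q, z⟫ - ⟪q, e⟫ with hc
        set θ : ℝ := min (1/2 : ℝ) (⟪q, z⟫ / (2 * (|c| + 1))) with hθ
        have hθpos : 0 < θ := lt_min (by norm_num) (div_pos hpos (by positivity))
        have hθhalf : θ ≤ 1/2 := min_le_left _ _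
        have hcombo : θ • e + (1 - θ) • z ∈ interior K :=
          hKconv.combo_interior_self_mem_interior he hz hθpos (by linarith) (by ring)
        have h := hint _ hcombo
        rw [inner_add_right, real_inner_smul_right, real_inner_smul_right] at h
        have hθc : θ * c ≤ ⟪q, z⟫ / 2 := by
          calc θ * c ≤ θ * |c| := mul_le_mul_of_nonneg_left (le_abs_self c) hθpos.le
            _ ≤ (⟪q, z⟫ / (2 * (|c| + 1))) * |c| :=
                mul_le_mul_of_nonneg_right (min_le_right _ _) (abs_nonneg c)
            _ ≤ ⟪q, z⟫ / 2 := by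
                rw [div_mul_eq_mul_div, div_le_div_iff₀ (by positivity) (by norm_num)]
                nlinarith [abs_nonneg c]
        have hsplit : θ * c = θ * ⟪q, z⟫ - θ * ⟪q, e⟫ := by rw [hc]; ring
        nlinarith
      have hmqK : -q ∈ K := by
        rw [← hKselfdual]
        intro z hz
        rw [inner_neg_left]
        linarith [hK0 z hz]
      have hcbnn : 0 ≤ ⟪y, b⟫ := by
        by_contra hneg
        push_neg at hneg
        have hge := hy e he
        rw [← hqin] at hge
        have hqe : ⟪q, e⟫ < 0 := lt_trans hge hneg
        set l : ℝ := ⟪y, b⟫ / (2 * ⟪q, e⟫) with hl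
        have hlpos : 0 < l := div_pos_of_neg_of_neg hneg (by linarith)
        have h := hy (l • e) (aux_smul_interior hKcone he hlpos)
        rw [map_smul, real_inner_smul_right, ← hqin] at h
        have hle : l * ⟪q, e⟫ = ⟪y, b⟫ / 2 := by
          rw [hl, div_mul_eq_mul_div, mul_div_mul_right _ _ hqe.ne]
        rw [hle] at h
        linarith
      set d : ℝ := ⟪e, -q⟫ + ⟪b, y⟫ with hd
      have hby : ⟪b, y⟫ = ⟪y, b⟫ := real_inner_comm y b
      have hdpos : 0 < d := by
        rcases eq_or_ne q 0 with hq0 | hq0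
        · have hge := hy e he
          rw [← hqin, hq0] at hge
          simp only [inner_zero_left] at hge
          rw [hd, hq0, hby]
          simpa using hge
        · obtain ⟨δ, hδ, hδle⟩ := aux_delta hKselfdual he
          have h1 := hδle _ hmqK
          have h2 : 0 < ‖-q‖ := norm_pos_iff.mpr (neg_ne_zero.mpr hq0)
          rw [hd, hby]
          nlinarith
      refine le_antisymm ?_ ?_
      · apply sInf_le
        refine ⟨d⁻¹ • y, d⁻¹ • (-q), 0, d⁻¹ * ⟪b, y⟫,
          hKcone _ hmqK d⁻¹ (by positivity), le_refl 0,
          mul_nonneg (by positivity) (hby ▸ hcbnn), ?_, ?_, ?_, EReal.coe_zero.symm⟩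
        · rw [real_inner_smul_right]; ring
        · rw [real_inner_smul_right, ← mul_add, ← hd, inv_mul_cancel₀ hdpos.ne']
        · rw [map_smul, zero_smul, add_zero, smul_neg, ← hq, sub_neg_eq_add,
            neg_add_cancel]
      · apply le_sInf
        rintro v ⟨y', z', t', w', _, ht', _, _, _, _, rfl⟩
        exact_mod_cast ht'
  · -- second part
    rintro y z w hzK hw h1 h2 h3
    rw [zero_smul, add_zero, sub_eq_zero] at h3
    have hby : ⟪b, y⟫ = w := by linarith
    rcases hw.lt_or_eq with hpos | heq
    · exact Or.inl ⟨h3 ▸ hzK, by linarith⟩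
    · refine Or.inr ⟨h3 ▸ hzK, ?_, by linarith⟩
      rw [h3]
      intro h0
      rw [h0, ← heq] at h2
      simp at h2
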